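/- Let Ĥ = H ⊕ H with Ĵ = J ⊕ I and p(x₁ ⊕ x₂) = x₁. If L is a maximal positive subspace of (Ĥ, Ĵ), then L' := p(L ∩ (H ⊕ {0})) is a maximal positive subspace of (H, J). Moreover, if L is invariant under the block upper-triangular operator V̂ = [[V, A],[0, B*]], then L' is invariant under V. -/

import Mathlib

set_option maxHeartbeats 2000000

theorem block_invariant_subspace_restriction {H : Type*} [NormedAddCommGroup H]
    [InnerProductSpace ℂ H] [CompleteSpace H]
    (J : H →L[ℂ] H) (hJ : IsSelfAdjoint J) (hJ2 : J ∘L J = 1)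
    (Jhat : WithLp 2 (H × H) →L[ℂ] WithLp 2 (H × H))
    (hJhat : ∀ x : WithLp 2 (H × H), (Jhat x).ofLp.1 = J x.ofLp.1 ∧ (Jhat x).ofLp.2 = x.ofLp.2)
    (p q : WithLp 2 (H × H) →L[ℂ] H)
    (hp : ∀ x : WithLp 2 (H × H), p x = x.ofLp.1)
    (hq : ∀ x : WithLp 2 (H × H), q x = x.ofLp.2)
    (V A Bstar : H →L[ℂ] H)
    (Vhat : WithLp 2 (H × H) →L[ℂ] WithLp 2 (H × H))
    (hVhat : ∀ x : WithLp 2 (H × H),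
      (Vhat x).ofLp.1 = V x.ofLp.1 + A x.ofLp.2 ∧ (Vhat x).ofLp.2 = Bstar x.ofLp.2)
    (L : Submodule ℂ (WithLp 2 (H × H)))
    (hLpos : ∀ x ∈ L, 0 ≤ (inner ℂ x (Jhat x) : ℂ).re)
    (hLmax : ∀ M : Submodule ℂ (WithLp 2 (H × H)),
      (∀ x ∈ M, 0 ≤ (inner ℂ x (Jhat x) : ℂ).re) → L ≤ M → M = L) :
    ((∀ y ∈ (L ⊓ LinearMap.ker (q : WithLp 2 (H × H) →ₗ[ℂ] H)).map (p : WithLp 2 (H × H) →ₗ[ℂ] H), 0 ≤ (inner ℂ y (J y) : ℂ).re) ∧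
      (∀ M : Submodule ℂ H, (∀ y ∈ M, 0 ≤ (inner ℂ y (J y) : ℂ).re) →
        (L ⊓ LinearMap.ker (q : WithLp 2 (H × H) →ₗ[ℂ] H)).map (p : WithLp 2 (H × H) →ₗ[ℂ] H) ≤ M → M = (L ⊓ LinearMap.ker (q : WithLp 2 (H × H) →ₗ[ℂ] H)).map (p : WithLp 2 (H × H) →ₗ[ℂ] H))) ∧
    ((∀ x ∈ L, Vhat x ∈ L) →
      ∀ y ∈ (L ⊓ LinearMap.ker (q : WithLp 2 (H × H) →ₗ[ℂ] H)).map
        (p : WithLp 2 (H × H) →ₗ[ℂ] H), V y ∈ (L ⊓ LinearMap.ker (q : WithLp 2 (H × H) →ₗ[ℂ] H)).map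
        (p : WithLp 2 (H × H) →ₗ[ℂ] H)) := by
  classical
  -- basic facts about J
  have hJsym : ∀ a b : H, (inner ℂ (J a) b : ℂ) = inner ℂ a (J b) := fun a b => by
    conv_lhs => rw [← hJ.adjoint_eq]
    exact ContinuousLinearMap.adjoint_inner_left J b a
  have hJJ : ∀ a : H, J (J a) = a := fun a => by
    have := ContinuousLinearMap.ext_iff.mp hJ2 a
    simpa using this
  set P : H →L[ℂ] H := (2⁻¹ : ℂ) • (1 + J) with hPdef
  set Pm : H →L[ℂ] H := (2⁻¹ : ℂ) • (1 - J) with hPmdef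
  have hPapp : ∀ a : H, P a = (2⁻¹ : ℂ) • (a + J a) := fun a => rfl
  have hPmapp : ∀ a : H, Pm a = (2⁻¹ : ℂ) • (a - J a) := fun a => rfl
  have half2 : (2 : ℂ) * 2⁻¹ = 1 := by norm_num
  have hPadd : ∀ a : H, P a + Pm a = a := fun a => by
    rw [hPapp, hPmapp, ← smul_add]
    have h2 : (a + J a) + (a - J a) = (2 : ℂ) • a := by
      rw [two_smul]; abel
    rw [h2, smul_smul]
    norm_num
  have hJP : ∀ a : H, J (P a) = P a := fun a => by
    rw [hPapp, map_smul, map_add, hJJ, add_comm (J a) a]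
  have hPP : ∀ a : H, P (P a) = P a := fun a => by
    rw [hPapp (P a), hJP, ← two_smul ℂ (P a), smul_smul,
      show ((2:ℂ)⁻¹ * 2) = 1 by norm_num, one_smul]
  have hJP2 : ∀ a : H, (2 : ℂ) • P a - a = J a := fun a => by
    rw [hPapp a, smul_smul, half2, one_smul, add_sub_cancel_left]
  have hc2 : (starRingEnd ℂ) (2⁻¹ : ℂ) = 2⁻¹ := by rw [map_inv₀, map_ofNat]
  have hPsym : ∀ a b : H, (inner ℂ (P a) b : ℂ) = inner ℂ a (P b) := fun a b => by
    rw [hPapp, hPapp, inner_smul_left, inner_smul_right, inner_add_left, inner_add_right,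
      hJsym, hc2]
  -- the quadratic form identity on H
  have hform : ∀ a : H, (inner ℂ a (J a) : ℂ).re = ‖P a‖ ^ 2 - ‖Pm a‖ ^ 2 := fun a => by
    have h1 : (inner ℂ (J a) a : ℂ) = inner ℂ a (J a) := hJsym a a
    have h2 : (inner ℂ (J a) (J a) : ℂ) = inner ℂ a a := by rw [hJsym, hJJ]
    have key : (inner ℂ (P a) (P a) : ℂ) - inner ℂ (Pm a) (Pm a) = inner ℂ a (J a) := by
      rw [hPapp, hPmapp]
      simp only [inner_smul_left, inner_smul_right, inner_add_left, inner_add_right,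
        inner_sub_left, inner_sub_right, hc2, h1, h2]
      ring
    have key2 : (inner ℂ a (J a) : ℂ) = ((‖P a‖ ^ 2 - ‖Pm a‖ ^ 2 : ℝ) : ℂ) := by
      rw [← key, inner_self_eq_norm_sq_to_K, inner_self_eq_norm_sq_to_K]
      norm_cast
    rw [key2, Complex.ofReal_re]
  -- the operator T = (1 + Jhat)/2 on Ĥ
  set T : WithLp 2 (H × H) →L[ℂ] WithLp 2 (H × H) := (2⁻¹ : ℂ) • (1 + Jhat) with hTdef
  have hT1 : ∀ x : WithLp 2 (H × H), (T x).ofLp.1 = P x.ofLp.1 := fun x => by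
    show (2⁻¹ : ℂ) • (x.ofLp.1 + (Jhat x).ofLp.1) = P x.ofLp.1
    rw [(hJhat x).1, hPapp]
  have hT2 : ∀ x : WithLp 2 (H × H), (T x).ofLp.2 = x.ofLp.2 := fun x => by
    show (2⁻¹ : ℂ) • (x.ofLp.2 + (Jhat x).ofLp.2) = x.ofLp.2
    rw [(hJhat x).2, ← two_smul ℂ x.ofLp.2, smul_smul]
    norm_num
  have hTT : ∀ x : WithLp 2 (H × H), T (T x) = T x := fun x => by
    refine WithLp.ofLp_injective 2 (Prod.ext ?_ ?_)
    · rw [hT1, hT1, hPP]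
    · rw [hT2, hT2]
  have hTsym : ∀ x y : WithLp 2 (H × H), (inner ℂ (T x) y : ℂ) = inner ℂ x (T y) := fun x y => by
    rw [WithLp.prod_inner_apply, WithLp.prod_inner_apply, hT1, hT2, hT1, hT2, hPsym]
  have hJhatT : ∀ x : WithLp 2 (H × H), Jhat x = (2 : ℂ) • T x - x := fun x => by
    refine WithLp.ofLp_injective 2 (Prod.ext ?_ ?_)
    · show (Jhat x).ofLp.1 = (2 : ℂ) • (T x).ofLp.1 - x.ofLp.1
      rw [(hJhat x).1, hT1, hJP2]
    · show (Jhat x).ofLp.2 = (2 : ℂ) • (T x).ofLp.2 - x.ofLp.2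
      rw [(hJhat x).2, hT2, two_smul, add_sub_cancel_right]
  -- quadratic form on Ĥ
  have hqhat : ∀ x : WithLp 2 (H × H),
      (inner ℂ x (Jhat x) : ℂ).re = (inner ℂ x.ofLp.1 (J x.ofLp.1) : ℂ).re + ‖x.ofLp.2‖ ^ 2 := fun x => by
    rw [WithLp.prod_inner_apply, (hJhat x).1, (hJhat x).2, Complex.add_re,
      inner_self_eq_norm_sq_to_K]
    norm_cast
  have hTnormsq : ∀ x : WithLp 2 (H × H), ‖T x‖ ^ 2 = ‖P x.ofLp.1‖ ^ 2 + ‖x.ofLp.2‖ ^ 2 := fun x => by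
    rw [WithLp.prod_norm_sq_eq_of_L2]
    show ‖(T x).ofLp.1‖ ^ 2 + ‖(T x).ofLp.2‖ ^ 2 = _
    rw [hT1, hT2]
  -- L is closed
  have hLclosed : IsClosed (L : Set (WithLp 2 (H × H))) := by
    have hC : IsClosed {x : WithLp 2 (H × H) | 0 ≤ (inner ℂ x (Jhat x) : ℂ).re} := by
      apply isClosed_le continuous_const
      exact Complex.continuous_re.comp (continuous_id.inner Jhat.continuous)
    have hpos : ∀ x ∈ L.topologicalClosure, 0 ≤ (inner ℂ x (Jhat x) : ℂ).re := by
      intro x hx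
      have hx' : x ∈ closure (L : Set (WithLp 2 (H × H))) := by
        rwa [← Submodule.topologicalClosure_coe]
      exact closure_minimal (fun z hz => hLpos z hz) hC hx'
    have heq := hLmax L.topologicalClosure hpos L.le_topologicalClosure
    rw [← heq]
    exact Submodule.isClosed_topologicalClosure L
  -- S = T(L) is closed
  set S : Submodule ℂ (WithLp 2 (H × H)) := L.map (T : WithLp 2 (H × H) →ₗ[ℂ] WithLp 2 (H × H)) with hSdef
  have hbound : ∀ x ∈ L, ‖x‖ ≤ 3 * ‖T x‖ := by
    intro x hx
    have h0 := hLpos x hx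
    rw [hqhat x, hform x.ofLp.1] at h0
    have hx1 : ‖x.ofLp.1‖ ≤ ‖P x.ofLp.1‖ + ‖Pm x.ofLp.1‖ := by
      calc ‖x.ofLp.1‖ = ‖P x.ofLp.1 + Pm x.ofLp.1‖ := by rw [hPadd]
        _ ≤ ‖P x.ofLp.1‖ + ‖Pm x.ofLp.1‖ := norm_add_le _ _
    have hxx : ‖x‖ ^ 2 = ‖x.ofLp.1‖ ^ 2 + ‖x.ofLp.2‖ ^ 2 := WithLp.prod_norm_sq_eq_of_L2 x
    have hT := hTnormsq x
    nlinarith [norm_nonneg x, norm_nonneg (T x), norm_nonneg x.ofLp.1, norm_nonneg x.ofLp.2,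
      norm_nonneg (P x.ofLp.1), norm_nonneg (Pm x.ofLp.1), sq_nonneg (‖P x.ofLp.1‖ - ‖Pm x.ofLp.1‖),
      sq_nonneg (‖x‖ - 3 * ‖T x‖), sq_nonneg (‖x‖ + 3 * ‖T x‖)]
  have hSclosed : IsClosed (S : Set (WithLp 2 (H × H))) := by
    haveI : CompleteSpace L := hLclosed.completeSpace_coe
    set f := T.comp L.subtypeL with hfdef
    have hf : AntilipschitzWith 3 f := by
      apply f.antilipschitz_of_bound
      intro x
      have h3 : ((3 : NNReal) : ℝ) = 3 := by norm_num
      rw [h3]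
      exact hbound x x.2
    have hrange : Set.range f = (S : Set (WithLp 2 (H × H))) := by
      ext y
      constructor
      · rintro ⟨x, rfl⟩
        exact ⟨(x : WithLp 2 (H × H)), x.2, rfl⟩
      · rintro ⟨x, hx, rfl⟩
        exact ⟨⟨x, hx⟩, rfl⟩
    rw [← hrange]
    exact hf.isClosed_range f.uniformContinuous
  haveI : CompleteSpace S := hSclosed.completeSpace_coe
  -- key surjectivity fact: every vector of the form T m̂ lies in T(L)
  have hkey : ∀ v : WithLp 2 (H × H), T v ∈ S := by
    intro v
    obtain ⟨s, hs, w, hw, husw⟩ := Submodule.exists_add_mem_mem_orthogonal (K := S) (T v)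
    have hTu : T (T v) = T v := hTT v
    have hTs : T s = s := by
      obtain ⟨x, hx, rfl⟩ := hs
      exact hTT x
    have hTw : T w = w := by
      have hwus : w = T v - s := by rw [husw]; abel
      rw [hwus, map_sub, hTu, hTs]
    -- inner ℂ products of w against L vanish
    have hTxw : ∀ x ∈ L, (inner ℂ (T x) w : ℂ) = 0 := fun x hx =>
      (Submodule.mem_orthogonal S w).mp hw (T x) (Submodule.mem_map_of_mem hx)
    have hxw : ∀ x ∈ L, (inner ℂ x w : ℂ) = 0 := fun x hx => by
      have := hTsym x w
      rw [hTw, hTxw x hx] at this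
      exact this.symm
    have hwx : ∀ x ∈ L, (inner ℂ w x : ℂ) = 0 := fun x hx => by
      rw [← inner_conj_symm, hxw x hx, map_zero]
    have hJw : Jhat w = w := by
      rw [hJhatT w, hTw, two_smul, add_sub_cancel_right]
    have hwJx : ∀ x ∈ L, (inner ℂ w (Jhat x) : ℂ) = 0 := fun x hx => by
      rw [hJhatT x, inner_sub_right, inner_smul_right, hwx x hx]
      have : (inner ℂ w (T x) : ℂ) = 0 := by
        rw [← inner_conj_symm, hTxw x hx, map_zero]
      rw [this]
      ring
    -- the span extension is positive
    have hNpos : ∀ z ∈ L ⊔ Submodule.span ℂ {w}, 0 ≤ (inner ℂ z (Jhat z) : ℂ).re := by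
      intro z hz
      obtain ⟨x, hx, y, hy, rfl⟩ := Submodule.mem_sup.mp hz
      obtain ⟨c, rfl⟩ := Submodule.mem_span_singleton.mp hy
      have hexp : (inner ℂ (x + c • w) (Jhat (x + c • w)) : ℂ)
          = inner ℂ x (Jhat x) + inner ℂ (c • w) (c • w) := by
        rw [map_add, map_smul, hJw]
        simp only [inner_add_left, inner_add_right, inner_smul_left, inner_smul_right,
          hxw x hx, hwJx x hx, mul_zero, add_zero, zero_add]
      rw [hexp, Complex.add_re]
      exact add_nonneg (hLpos x hx) (by simpa using inner_self_nonneg (𝕜 := ℂ) (x := c • w))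
    have hNL := hLmax (L ⊔ Submodule.span ℂ {w}) hNpos le_sup_left
    have hwL : w ∈ L := by
      rw [← hNL]
      exact Submodule.mem_sup_right (Submodule.mem_span_singleton_self w)
    have hwS : w ∈ S := ⟨w, hwL, hTw⟩
    have hw0 : w = 0 := by
      have := (Submodule.mem_orthogonal S w).mp hw w hwS
      rwa [inner_self_eq_zero] at this
    rw [husw, hw0, add_zero]
    exact hs
  -- now prove the three statements
  have hmemL' : ∀ y : H, y ∈ (L ⊓ LinearMap.ker (q : WithLp 2 (H × H) →ₗ[ℂ] H)).map (p : WithLp 2 (H × H) →ₗ[ℂ] H) ↔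
      ∃ x ∈ L, x.ofLp.2 = 0 ∧ x.ofLp.1 = y := by
    intro y
    constructor
    · rintro ⟨x, ⟨hxL, hxq⟩, rfl⟩
      exact ⟨x, hxL, by rw [← hq x]; exact LinearMap.mem_ker.mp hxq, (hp x).symm⟩
    · rintro ⟨x, hxL, hx2, rfl⟩
      exact ⟨x, ⟨hxL, LinearMap.mem_ker.mpr (by rw [ContinuousLinearMap.coe_coe, hq x, hx2])⟩, hp x⟩
  have hpos' : ∀ y ∈ (L ⊓ LinearMap.ker (q : WithLp 2 (H × H) →ₗ[ℂ] H)).map (p : WithLp 2 (H × H) →ₗ[ℂ] H), 0 ≤ (inner ℂ y (J y) : ℂ).re := by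
    intro y hy
    obtain ⟨x, hxL, hx2, rfl⟩ := (hmemL' y).mp hy
    have := hLpos x hxL
    rw [hqhat x, hx2] at this
    simpa using this
  refine ⟨⟨hpos', ?_⟩, ?_⟩
  · -- maximality
    intro M hMpos hLM
    refine le_antisymm ?_ hLM
    intro m hm
    set mhat : WithLp 2 (H × H) := (WithLp.equiv 2 (H × H)).symm (m, 0) with hmhatdef
    have hmhat1 : mhat.ofLp.1 = m := rfl
    have hmhat2 : mhat.ofLp.2 = (0 : H) := rfl
    obtain ⟨x, hxL, hTx⟩ := hkey mhat
    have hx2 : x.ofLp.2 = 0 := by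
      have := congrArg (fun z : WithLp 2 (H × H) => z.ofLp.2) hTx
      rw [ContinuousLinearMap.coe_coe, hT2, hT2, hmhat2] at this
      exact this
    have hPx1 : P x.ofLp.1 = P m := by
      have := congrArg (fun z : WithLp 2 (H × H) => z.ofLp.1) hTx
      rw [ContinuousLinearMap.coe_coe, hT1, hT1, hmhat1] at this
      exact this
    have hyL' : x.ofLp.1 ∈ (L ⊓ LinearMap.ker (q : WithLp 2 (H × H) →ₗ[ℂ] H)).map (p : WithLp 2 (H × H) →ₗ[ℂ] H) := (hmemL' x.ofLp.1).mpr ⟨x, hxL, hx2, rfl⟩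
    have hyM : x.ofLp.1 ∈ M := hLM hyL'
    have hdM : m - x.ofLp.1 ∈ M := sub_mem hm hyM
    have hP0 : P (m - x.ofLp.1) = 0 := by rw [map_sub, hPx1, sub_self]
    have hd := hMpos _ hdM
    rw [hform, hP0] at hd
    have hPm0 : Pm (m - x.ofLp.1) = 0 := by
      have h1 : ‖Pm (m - x.ofLp.1)‖ ^ 2 ≤ 0 := by simpa using hd
      have h2 : ‖Pm (m - x.ofLp.1)‖ = 0 := by nlinarith [norm_nonneg (Pm (m - x.ofLp.1))]
      exact norm_eq_zero.mp h2
    have hmy : m = x.ofLp.1 := by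
      have := hPadd (m - x.ofLp.1)
      rw [hP0, hPm0, add_zero] at this
      have h0 : m - x.ofLp.1 = 0 := this.symm
      exact sub_eq_zero.mp h0
    rw [hmy]
    exact hyL'
  · -- invariance
    intro hinv y hy
    obtain ⟨x, hxL, hx2, rfl⟩ := (hmemL' y).mp hy
    refine (hmemL' _).mpr ⟨Vhat x, hinv x hxL, ?_, ?_⟩
    · rw [(hVhat x).2, hx2, map_zero]
    · rw [(hVhat x).1, hx2, map_zero, add_zero]
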